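/- Let (sₙ) be a bounded sequence of nonnegative reals with positive upper bound M ∈ ℕ, let (λₙ) ⊂ (0,1), and let (rₙ), (vₙ) be real sequences. Suppose L : ℕ → ℕ is monotone with Σ_{i=1}^{L(k)} λᵢ ≥ k for all k, and suppose s_{i+1} ≤ (1−λᵢ)(sᵢ+vᵢ) + λᵢ rᵢ for all i. If for given k, n, q ∈ ℕ we have vᵢ ≤ 1/(3(k+1)(q+1)) and rᵢ ≤ 1/(3(k+1)) for all i ∈ [n, q], then sᵢ ≤ 1/(k+1) for all i ∈ [σ(k,n), q], where σ(k,n) := L(n + ⌈ln(3M(k+1))⌉) + 1. -/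

import Mathlib

theorem stmt4 (s lam r v : ℕ → ℝ) (M : ℕ) (hM : 0 < M)
    (hs : ∀ n, 0 ≤ s n) (hsM : ∀ n, s n ≤ M)
    (hlam : ∀ n, lam n ∈ Set.Ioo (0 : ℝ) 1)
    (L : ℕ → ℕ) (hLmono : Monotone L)
    (hL : ∀ k : ℕ, (k : ℝ) ≤ ∑ i ∈ Finset.Icc 1 (L k), lam i)
    (hrec : ∀ i, s (i + 1) ≤ (1 - lam i) * (s i + v i) + lam i * r i)
    (k n q : ℕ)
    (hv : ∀ i ∈ Finset.Icc n q, v i ≤ 1 / (3 * (k + 1) * (q + 1)))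
    (hr : ∀ i ∈ Finset.Icc n q, r i ≤ 1 / (3 * (k + 1))) :
    ∀ i ∈ Finset.Icc (L (n + ⌈Real.log (3 * M * (k + 1))⌉₊) + 1) q,
      s i ≤ 1 / (k + 1) := by
  intro i hi
  rw [Finset.mem_Icc] at hi
  obtain ⟨hi1, hi2⟩ := hi
  set K := n + ⌈Real.log (3 * M * (k + 1))⌉₊ with hKdef
  have hlam0 : ∀ j, 0 < lam j := fun j => (hlam j).1
  have hlam1 : ∀ j, lam j < 1 := fun j => (hlam j).2
  set b : ℝ := 1 / (3 * ((k : ℝ) + 1) * ((q : ℝ) + 1)) with hbdef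
  set c : ℝ := 1 / (3 * ((k : ℝ) + 1)) with hcdef
  have hb : (0:ℝ) ≤ b := by positivity
  have hc : (0:ℝ) ≤ c := by positivity
  have hP0 : ∀ m, 0 ≤ ∏ j ∈ Finset.Ico n m, (1 - lam j) :=
    fun m => Finset.prod_nonneg (fun j _ => by linarith [hlam1 j])
  have hP1 : ∀ m, ∏ j ∈ Finset.Ico n m, (1 - lam j) ≤ 1 :=
    fun m => Finset.prod_le_one (fun j _ => by linarith [hlam1 j])
      (fun j _ => by linarith [hlam0 j])
  -- K ≤ L K since each lam < 1
  have hKLK : K ≤ L K := by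
    by_contra hcon
    push_neg at hcon
    have h1 : ∑ j ∈ Finset.Icc 1 (L K), lam j ≤ (L K : ℝ) := by
      calc ∑ j ∈ Finset.Icc 1 (L K), lam j ≤ ∑ j ∈ Finset.Icc 1 (L K), 1 :=
            Finset.sum_le_sum (fun j _ => (hlam1 j).le)
        _ = (L K : ℝ) := by simp
    have := hL K
    have : (K : ℝ) ≤ (L K : ℝ) := le_trans this h1
    exact absurd (Nat.cast_le.mp this) (by omega)
  have hni : n + 1 ≤ i := by omega
  -- Main unrolling claim
  have main : ∀ m, n ≤ m → m ≤ q + 1 →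
      s m ≤ (∏ j ∈ Finset.Ico n m, (1 - lam j)) * M + ((m - n : ℕ) : ℝ) * b
        + (1 - ∏ j ∈ Finset.Ico n m, (1 - lam j)) * c := by
    intro m hm
    induction m, hm using Nat.le_induction with
    | base => intro _; simp [hsM n]
    | succ m hm ih =>
      intro hmq
      have hmq' : m ≤ q := by omega
      have ih' := ih (by omega)
      have hvm : v m ≤ b := hv m (Finset.mem_Icc.mpr ⟨hm, hmq'⟩)
      have hrm : r m ≤ c := hr m (Finset.mem_Icc.mpr ⟨hm, hmq'⟩)
      have hprod : ∏ j ∈ Finset.Ico n (m+1), (1 - lam j)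
          = (∏ j ∈ Finset.Ico n m, (1 - lam j)) * (1 - lam m) :=
        Finset.prod_Ico_succ_top hm _
      have hd : ((m + 1 - n : ℕ) : ℝ) = ((m - n : ℕ) : ℝ) + 1 := by
        have : m + 1 - n = (m - n) + 1 := by omega
        rw [this]; push_cast; ring
      set P := ∏ j ∈ Finset.Ico n m, (1 - lam j) with hPdef
      set d := ((m - n : ℕ) : ℝ) with hddef
      have hd0 : (0:ℝ) ≤ d := Nat.cast_nonneg _
      have hP0' : 0 ≤ P := hP0 m
      have hP1' : P ≤ 1 := hP1 m
      have hl0 := hlam0 m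
      have hl1 := hlam1 m
      rw [hprod, hd]
      calc s (m+1) ≤ (1 - lam m) * (s m + v m) + lam m * r m := hrec m
        _ ≤ (1 - lam m) * ((P * M + d * b + (1 - P) * c) + b) + lam m * c := by
            have h1 : s m + v m ≤ (P * M + d * b + (1 - P) * c) + b := add_le_add ih' hvm
            have h2 := mul_le_mul_of_nonneg_left h1 (by linarith : (0:ℝ) ≤ 1 - lam m)
            have h3 := mul_le_mul_of_nonneg_left hrm hl0.le
            linarith
        _ ≤ P * (1 - lam m) * M + (d + 1) * b + (1 - P * (1 - lam m)) * c := by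
            nlinarith [mul_nonneg hl0.le (mul_nonneg (by linarith : (0:ℝ) ≤ d + 1) hb),
              mul_nonneg (Nat.cast_nonneg M : (0:ℝ) ≤ (M:ℝ)) hl0.le]
  have hmain := main i (by omega) (by omega)
  -- Sum lower bound on Ico n i
  have hsum_split : ∑ j ∈ Finset.Icc 1 (L K), lam j
      ≤ ∑ j ∈ Finset.Ico 0 n, lam j + ∑ j ∈ Finset.Ico n (L K + 1), lam j := by
    rw [← Finset.sum_union (Finset.Ico_disjoint_Ico_consecutive 0 n (L K + 1)),
      Finset.Ico_union_Ico_eq_Ico (Nat.zero_le n) (by omega)]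
    exact Finset.sum_le_sum_of_subset_of_nonneg
      (by intro x hx; simp only [Finset.mem_Icc, Finset.mem_Ico] at *; omega)
      (fun j _ _ => (hlam0 j).le)
  have hsum_n : ∑ j ∈ Finset.Ico 0 n, lam j ≤ (n : ℝ) := by
    calc ∑ j ∈ Finset.Ico 0 n, lam j ≤ ∑ j ∈ Finset.Ico 0 n, 1 :=
          Finset.sum_le_sum (fun j _ => (hlam1 j).le)
      _ = (n : ℝ) := by simp
  have hceil : Real.log (3 * M * (k + 1)) ≤ (⌈Real.log (3 * M * (k + 1))⌉₊ : ℝ) :=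
    Nat.le_ceil _
  have hsum_lb : Real.log (3 * M * (k + 1)) ≤ ∑ j ∈ Finset.Ico n (L K + 1), lam j := by
    have hLK := hL K
    have : (K : ℝ) = (n : ℝ) + (⌈Real.log (3 * M * (k + 1))⌉₊ : ℝ) := by
      rw [hKdef]; push_cast; ring
    linarith
  have hsum_i : ∑ j ∈ Finset.Ico n (L K + 1), lam j ≤ ∑ j ∈ Finset.Ico n i, lam j :=
    Finset.sum_le_sum_of_subset_of_nonneg
      (by intro x hx; simp only [Finset.mem_Ico] at *; omega)
      (fun j _ _ => (hlam0 j).le)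
  -- Product upper bound via exp
  have hX : (0:ℝ) < 3 * M * (k + 1) := by positivity
  have hPexp : ∏ j ∈ Finset.Ico n i, (1 - lam j) ≤ 1 / (3 * (M : ℝ) * ((k : ℝ) + 1)) := by
    calc ∏ j ∈ Finset.Ico n i, (1 - lam j)
        ≤ ∏ j ∈ Finset.Ico n i, Real.exp (-lam j) := by
          refine Finset.prod_le_prod (fun j _ => by linarith [hlam1 j]) (fun j _ => ?_)
          linarith [Real.add_one_le_exp (-lam j)]
      _ = Real.exp (∑ j ∈ Finset.Ico n i, -lam j) := (Real.exp_sum _ _).symm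
      _ = Real.exp (-(∑ j ∈ Finset.Ico n i, lam j)) := by rw [Finset.sum_neg_distrib]
      _ ≤ Real.exp (-(Real.log (3 * M * (k + 1)))) := by
          apply Real.exp_le_exp.mpr; linarith
      _ = 1 / (3 * (M : ℝ) * ((k : ℝ) + 1)) := by
          rw [Real.exp_neg, Real.exp_log hX]; ring
  -- Put everything together
  set P := ∏ j ∈ Finset.Ico n i, (1 - lam j) with hPdef
  have hPM : P * (M : ℝ) ≤ c := by
    have h1 : P * (M : ℝ) ≤ (1 / (3 * (M : ℝ) * ((k : ℝ) + 1))) * (M : ℝ) :=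
      mul_le_mul_of_nonneg_right hPexp (Nat.cast_nonneg M)
    have hM0 : (0:ℝ) < (M : ℝ) := by exact_mod_cast hM
    have h2 : (1 / (3 * (M : ℝ) * ((k : ℝ) + 1))) * (M : ℝ) = c := by
      rw [hcdef]; field_simp
    linarith
  have hdb : ((i - n : ℕ) : ℝ) * b ≤ c := by
    have h1 : ((i - n : ℕ) : ℝ) ≤ (q : ℝ) + 1 := by
      have : (i - n : ℕ) ≤ q + 1 := by omega
      exact_mod_cast this
    have h2 : ((q : ℝ) + 1) * b = c := by
      rw [hbdef, hcdef]; field_simp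
    calc ((i - n : ℕ) : ℝ) * b ≤ ((q : ℝ) + 1) * b := mul_le_mul_of_nonneg_right h1 hb
      _ = c := h2
  have hPc : (1 - P) * c ≤ c := by nlinarith [hP0 i, hP1 i]
  have hfinal : s i ≤ 3 * c := by
    have := hP0 i
    linarith [hmain, hPM, hdb, hPc]
  have h3c : 3 * c = 1 / ((k : ℝ) + 1) := by rw [hcdef]; field_simp
  linarith [hfinal, h3c.le]
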